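/- A nonempty subset X of Zar(F) has finite character (every nonzero x ∈ F is a unit in all but finitely many V ∈ X) if and only if X is finite or the set of patch limit points of X equals {F}. -/

import Mathlib

open Set

/-- A subring `V` of a field `F` is a valuation ring of `F` (with quotient field `F`). -/
def IsValSubring (F : Type*) [Field F] (V : Subring F) : Prop :=
  ∀ t : F, t ≠ 0 → t ∈ V ∨ t⁻¹ ∈ V

/-- The Zariski-Riemann space of the field `F`: the set of valuation rings of `F`. -/
def Zar (F : Type*) [Field F] : Type _ := {V : Subring F // IsValSubring F V}

/-- The patch (constructible) topology on `Zar F`, generated by the sets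
`{V : x ∈ V}` and `{V : y ∉ V}` for `x, y ∈ F`. -/
instance Zar.patchTopology (F : Type*) [Field F] : TopologicalSpace (Zar F) :=
  TopologicalSpace.generateFrom
    ({S | ∃ x : F, S = {V : Zar F | x ∈ V.1}} ∪ {S | ∃ y : F, S = {V : Zar F | y ∉ V.1}})

variable {F : Type*} [Field F]

/-- The maximal ideal of a valuation ring of `F`, as a subset of `F`. -/
def mIdeal (V : Zar F) : Set F := {x : F | x ∈ V.1 ∧ (x = 0 ∨ x⁻¹ ∉ V.1)}

/-- `A(X)`: the intersection of the valuation rings in `X`, as a subset of `F`. -/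
def aSet (X : Set (Zar F)) : Set F := ⋂ V ∈ X, ((V : Zar F).1 : Set F)

/-- `A(X)` as a subring of `F`. -/
def ASub (X : Set (Zar F)) : Subring F := ⨅ V ∈ X, (V : Zar F).1

/-- `J(X)`: the intersection of the maximal ideals of the valuation rings in `X`. -/
def jSet (X : Set (Zar F)) : Set F := ⋂ V ∈ X, mIdeal V

/-- The set of limit points of `X` in the patch topology of `Zar F`. -/
def limPts (X : Set (Zar F)) : Set (Zar F) :=
  {V : Zar F | ∀ U : Set (Zar F), IsOpen U → V ∈ U → ∃ W ∈ X, W ≠ V ∧ W ∈ U}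


/-- The field `F` itself, as the trivial valuation ring in `Zar F`. -/
def trivV (F : Type*) [Field F] : Zar F := ⟨⊤, fun _ _ => Or.inl trivial⟩

/-- A set of valuation rings of `F` has finite character if every nonzero element of `F`
is a unit in all but finitely many of its members. -/
def FiniteChar (X : Set (Zar F)) : Prop :=
  ∀ x : F, x ≠ 0 → {V ∈ X | ¬ (x ∈ V.1 ∧ x⁻¹ ∈ V.1)}.Finite

open TopologicalSpace Filter

def subB (F : Type*) [Field F] : Set (Set (Zar F)) :=
  {S | ∃ x : F, S = {V : Zar F | x ∈ V.1}} ∪ {S | ∃ y : F, S = {V : Zar F | y ∉ V.1}}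

lemma isOpen_of_mem_subB {s : Set (Zar F)} (h : s ∈ subB F) : IsOpen s :=
  TopologicalSpace.GenerateOpen.basic s h

lemma subB_basis (F : Type*) [Field F] :
    IsTopologicalBasis ((fun f : Set (Set (Zar F)) => ⋂₀ f) '' {f : Set (Set (Zar F)) | f.Finite ∧ f ⊆ subB F}) :=
  isTopologicalBasis_of_subbasis rfl

lemma exists_basic {V : Zar F} {U : Set (Zar F)} (hU : IsOpen U) (hV : V ∈ U) :
    ∃ f : Set (Set (Zar F)), f.Finite ∧ f ⊆ subB F ∧ V ∈ ⋂₀ f ∧ ⋂₀ f ⊆ U := by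
  obtain ⟨b, ⟨f, ⟨hfin, hsub⟩, rfl⟩, hVb, hbU⟩ :=
    (subB_basis F).exists_subset_of_mem_open hV hU
  exact ⟨f, hfin, hsub, hVb, hbU⟩

lemma sep (V W : Zar F) (h : W ≠ V) : ∃ s, IsOpen s ∧ V ∈ s ∧ W ∉ s := by
  have hne : ¬ ∀ t : F, t ∈ V.1 ↔ t ∈ W.1 := by
    intro hall
    exact h (Subtype.ext (SetLike.ext fun t => (hall t).symm))
  push_neg at hne
  obtain ⟨t, ht⟩ := hne
  rcases ht with ⟨hV, hW⟩ | ⟨hV, hW⟩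
  · exact ⟨{V' : Zar F | t ∈ V'.1}, isOpen_of_mem_subB (Or.inl ⟨t, rfl⟩), hV, hW⟩
  · exact ⟨{V' : Zar F | t ∉ V'.1}, isOpen_of_mem_subB (Or.inr ⟨t, rfl⟩), hV, fun hs => hs hW⟩

lemma finite_bad {X : Set (Zar F)} (hFC : FiniteChar X) (f : Set (Set (Zar F)))
    (hfin : f.Finite) :
    f ⊆ subB F → trivV F ∈ ⋂₀ f → {V ∈ X | V ∉ ⋂₀ f}.Finite := by
  refine Set.Finite.induction_on f hfin
    (motive := fun f _ => f ⊆ subB F → trivV F ∈ ⋂₀ f → {V ∈ X | V ∉ ⋂₀ f}.Finite) (by intro _ _; simp) ?_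
  clear hfin f
  rintro a f ha hfin ih hsub htriv
  have htriv' : trivV F ∈ ⋂₀ f := fun s hs => htriv s (Set.mem_insert_of_mem a hs)
  have hfa : {V ∈ X | V ∉ a}.Finite := by
    rcases hsub (Set.mem_insert a f) with ⟨x, rfl⟩ | ⟨y, rfl⟩
    · rcases eq_or_ne x 0 with rfl | hx0
      · convert Set.finite_empty
        ext V; simp [zero_mem]
      · exact (hFC x hx0).subset fun V hV => ⟨hV.1, fun hc => hV.2 hc.1⟩
    · exact absurd (htriv _ (Set.mem_insert _ f)) (fun h => h trivial)
  exact (hfa.union (ih (fun s hs => hsub (Set.mem_insert_of_mem a hs)) htriv')).subset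
    (by
      intro V hV
      rw [Set.sInter_insert] at hV
      rcases Classical.em (V ∈ a) with h1 | h1
      · exact Or.inr ⟨hV.1, fun h2 => hV.2 ⟨h1, h2⟩⟩
      · exact Or.inl ⟨hV.1, h1⟩)

lemma trivV_limPt {X : Set (Zar F)} (hFC : FiniteChar X) (hinf : X.Infinite) :
    trivV F ∈ limPts X := by
  intro U hU hVU
  obtain ⟨f, hfin, hsub, hmem, hsubU⟩ := exists_basic hU hVU
  have hbad := finite_bad hFC f hfin hsub hmem
  obtain ⟨W, hW⟩ := (((hinf.diff hbad).diff (Set.finite_singleton (trivV F)))).nonempty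
  refine ⟨W, hW.1.1, hW.2, hsubU ?_⟩
  by_contra hc
  exact hW.1.2 ⟨hW.1.1, hc⟩

lemma limPt_eq_triv {X : Set (Zar F)} (hFC : FiniteChar X) {V : Zar F}
    (hV : V ∈ limPts X) : V = trivV F := by
  by_contra hne
  have hy' : ∃ y : F, y ∉ V.1 := by
    by_contra hall
    push_neg at hall
    exact hne (Subtype.ext ((Subring.eq_top_iff' V.1).mpr hall))
  obtain ⟨y, hy⟩ := hy'
  have hy0 : y ≠ 0 := fun h => hy (h ▸ zero_mem _)
  have hyi : y⁻¹ ∈ V.1 := (V.2 y hy0).resolve_left hy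
  set U₀ : Set (Zar F) := {W : Zar F | y⁻¹ ∈ W.1} ∩ {W : Zar F | y ∉ W.1} with hU₀def
  have hU₀ : IsOpen U₀ :=
    (isOpen_of_mem_subB (Or.inl ⟨y⁻¹, rfl⟩)).inter (isOpen_of_mem_subB (Or.inr ⟨y, rfl⟩))
  have hVU₀ : V ∈ U₀ := ⟨hyi, hy⟩
  set T : Set (Zar F) := (X ∩ U₀) \ {V} with hTdef
  have hTfin : T.Finite := by
    refine Set.Finite.diff ((hFC y hy0).subset ?_)
    rintro W ⟨hWX, _, hWy⟩
    exact ⟨hWX, fun hc => hWy hc.1⟩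
  have hsep : ∀ W ∈ T, ∃ s, IsOpen s ∧ V ∈ s ∧ W ∉ s := fun W hW => sep V W hW.2
  choose! s hso hsV hsW using hsep
  have hO : IsOpen (U₀ ∩ ⋂ W ∈ T, s W) :=
    hU₀.inter (hTfin.isOpen_biInter fun W hW => hso W hW)
  obtain ⟨W', hW'X, hW'ne, hW'U₀, hW'i⟩ :=
    hV _ hO ⟨hVU₀, Set.mem_biInter fun W hW => hsV W hW⟩
  have hW'T : W' ∈ T := ⟨⟨hW'X, hW'U₀⟩, hW'ne⟩
  exact hsW W' hW'T (Set.mem_iInter₂.mp hW'i W' hW'T)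

def limRing (𝒰 : Ultrafilter (Zar F)) : Subring F where
  carrier := {t : F | {V : Zar F | t ∈ V.1} ∈ 𝒰}
  one_mem' := by
    have : {V : Zar F | (1:F) ∈ V.1} = Set.univ := Set.eq_univ_of_forall fun V => show (1:F) ∈ V.1 from one_mem _
    simp only [Set.mem_setOf_eq, this]; exact Filter.univ_mem
  zero_mem' := by
    have : {V : Zar F | (0:F) ∈ V.1} = Set.univ := Set.eq_univ_of_forall fun V => show (0:F) ∈ V.1 from zero_mem _
    simp only [Set.mem_setOf_eq, this]; exact Filter.univ_mem
  add_mem' := fun {a b} ha hb =>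
    Filter.mem_of_superset (Filter.inter_mem ha hb) fun V hV => show _ ∈ V.1 from add_mem hV.1 hV.2
  mul_mem' := fun {a b} ha hb =>
    Filter.mem_of_superset (Filter.inter_mem ha hb) fun V hV => show _ ∈ V.1 from mul_mem hV.1 hV.2
  neg_mem' := fun {a} ha => Filter.mem_of_superset ha fun V hV => show _ ∈ V.1 from neg_mem hV

lemma mem_limRing {𝒰 : Ultrafilter (Zar F)} {t : F} :
    t ∈ limRing 𝒰 ↔ {V : Zar F | t ∈ V.1} ∈ 𝒰 := Iff.rfl

def limV (𝒰 : Ultrafilter (Zar F)) : Zar F :=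
  ⟨limRing 𝒰, by
    intro t ht
    have huniv : {V : Zar F | t ∈ V.1} ∪ {V : Zar F | t⁻¹ ∈ V.1} = Set.univ :=
      Set.eq_univ_of_forall fun V => V.2 t ht
    have : {V : Zar F | t ∈ V.1} ∪ {V : Zar F | t⁻¹ ∈ V.1} ∈ 𝒰 := by
      rw [huniv]; exact Filter.univ_mem
    rw [mem_limRing, mem_limRing]
    exact Ultrafilter.union_mem_iff.mp this⟩

lemma limV_limPt {T : Set (Zar F)} (𝒰 : Ultrafilter (Zar F)) (hle : (𝒰 : Filter (Zar F)) ≤ Filter.cofinite)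
    (hT : T ∈ 𝒰) : limV 𝒰 ∈ limPts T := by
  intro U hU hVU
  obtain ⟨f, hfin, hsub, hmem, hsubU⟩ := exists_basic hU hVU
  have hf : ⋂₀ f ∈ 𝒰 := by
    have h1 : ⋂₀ f ∈ (𝒰 : Filter (Zar F)) := by
      rw [Filter.sInter_mem hfin]
      intro s hs
      rcases hsub hs with ⟨x, rfl⟩ | ⟨y, rfl⟩
      · exact hmem _ hs
      · have h2 : {V : Zar F | y ∈ V.1} ∉ 𝒰 := hmem _ hs
        have h3 := (Ultrafilter.compl_mem_iff_notMem).mpr h2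
        convert h3 using 1
        exact Iff.rfl
    exact h1
  have hinf : (⋂₀ f ∩ T).Infinite := by
    intro hfin'
    have : (⋂₀ f ∩ T)ᶜ ∈ 𝒰 := hle (Filter.mem_cofinite.mpr (by simpa using hfin'))
    exact (Ultrafilter.compl_mem_iff_notMem).mp this (Filter.inter_mem hf hT)
  obtain ⟨W, hW⟩ := (hinf.diff (Set.finite_singleton (limV 𝒰))).nonempty
  exact ⟨W, hW.1.2, hW.2, hsubU hW.1.1⟩

lemma limpt_not_mem {X : Set (Zar F)} (hlim : limPts X = {trivV F}) {y : F} (hy : y ≠ 0) :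
    {V ∈ X | y ∉ V.1}.Finite := by
  by_contra hinf
  set T : Set (Zar F) := {V ∈ X | y ∉ V.1} with hTdef
  have hne : (Filter.cofinite ⊓ Filter.principal T).NeBot :=
    Filter.cofinite_inf_principal_neBot_iff.mpr hinf
  set 𝒰 : Ultrafilter (Zar F) := Ultrafilter.of (Filter.cofinite ⊓ Filter.principal T) with h𝒰
  have hle : (𝒰 : Filter (Zar F)) ≤ Filter.cofinite ⊓ Filter.principal T := Ultrafilter.of_le _
  have hT𝒰 : T ∈ 𝒰 := (le_inf_iff.mp hle).2 (Filter.mem_principal_self T)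
  have hlimpt : limV 𝒰 ∈ limPts T := limV_limPt 𝒰 (le_inf_iff.mp hle).1 hT𝒰
  have hsubset : limPts T ⊆ limPts X := by
    intro V hV U hU hVU
    obtain ⟨W, hW, h1, h2⟩ := hV U hU hVU
    exact ⟨W, hW.1, h1, h2⟩
  have heq : limV 𝒰 = trivV F := by
    have := hsubset hlimpt
    rwa [hlim, Set.mem_singleton_iff] at this
  -- y ∉ limV 𝒰, but limV 𝒰 = trivV F contains everything
  have hy𝒰 : {V : Zar F | y ∈ V.1} ∉ 𝒰 := by
    intro hmem
    obtain ⟨V, hV1, hV2⟩ := Ultrafilter.nonempty_of_mem (Filter.inter_mem hmem hT𝒰)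
    exact hV2.2 hV1
  have : y ∈ (limV 𝒰).1 := heq ▸ trivial
  exact hy𝒰 this

theorem stmt6 (X : Set (Zar F)) (hX : X.Nonempty) :
    FiniteChar X ↔ (X.Finite ∨ limPts X = {trivV F}) := by
  constructor
  · intro hFC
    rcases Classical.em X.Finite with hfin | hfin
    · exact Or.inl hfin
    · refine Or.inr (Set.eq_singleton_iff_unique_mem.mpr ?_)
      exact ⟨trivV_limPt hFC hfin, fun V hV => limPt_eq_triv hFC hV⟩
  · rintro (hfin | hlim)
    · intro x hx
      exact hfin.subset fun V hV => hV.1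
    · intro x hx
      have h1 : {V ∈ X | x ∉ V.1}.Finite := limpt_not_mem hlim hx
      have h2 : {V ∈ X | x⁻¹ ∉ V.1}.Finite := limpt_not_mem hlim (inv_ne_zero hx)
      refine (h1.union h2).subset ?_
      intro V hV
      rcases Classical.em (x ∈ V.1) with h | h
      · exact Or.inr ⟨hV.1, fun hc => hV.2 ⟨h, hc⟩⟩
      · exact Or.inl ⟨hV.1, h⟩
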